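/- For fixed c > 0, the function f₂(ω) = 1 / (ω · log₂(1 + c/ω)) on ω > 0 is convex, positive, and strictly decreasing. -/

import Mathlib

open Set Real

/-- The auxiliary function g(ω) = ω (log(ω+c) - log ω). -/
private noncomputable def gAux (c : ℝ) : ℝ → ℝ :=
  fun ω => ω * (Real.log (ω + c) - Real.log ω)

private lemma gAux_hasDerivAt (c : ℝ) (hc : 0 < c) {ω : ℝ} (hω : 0 < ω) :
    HasDerivAt (gAux c) (Real.log (ω + c) - Real.log ω - c / (ω + c)) ω := by
  have hωc : (0:ℝ) < ω + c := by linarith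
  have h1 : HasDerivAt (fun x : ℝ => Real.log (x + c)) (ω + c)⁻¹ ω := by
    have := (Real.hasDerivAt_log hωc.ne').comp ω ((hasDerivAt_id ω).add_const c)
    simpa only [Function.comp_def, id_eq, mul_one] using this
  have h2 : HasDerivAt Real.log ω⁻¹ ω := Real.hasDerivAt_log hω.ne'
  have hL : HasDerivAt (fun x : ℝ => Real.log (x + c) - Real.log x)
      ((ω + c)⁻¹ - ω⁻¹) ω := h1.sub h2
  have hg := (hasDerivAt_id ω).mul hL
  have h4 : HasDerivAt (gAux c)
      (Real.log (ω + c) - Real.log ω + ω * ((ω + c)⁻¹ - ω⁻¹)) ω := by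
    exact hg.congr_deriv (by simp)
  convert h4 using 1
  field_simp
  ring

private lemma gAux_deriv1_hasDerivAt (c : ℝ) (hc : 0 < c) {ω : ℝ} (hω : 0 < ω) :
    HasDerivAt (fun x : ℝ => Real.log (x + c) - Real.log x - c / (x + c))
      ((ω + c)⁻¹ - ω⁻¹ + c / (ω + c) ^ 2) ω := by
  have hωc : (0:ℝ) < ω + c := by linarith
  have h1 : HasDerivAt (fun x : ℝ => Real.log (x + c)) (ω + c)⁻¹ ω := by
    have := (Real.hasDerivAt_log hωc.ne').comp ω ((hasDerivAt_id ω).add_const c)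
    simpa only [Function.comp_def, id_eq, mul_one] using this
  have h2 : HasDerivAt Real.log ω⁻¹ ω := Real.hasDerivAt_log hω.ne'
  have h3 : HasDerivAt (fun x : ℝ => c / (x + c)) (-(c / (ω + c) ^ 2)) ω := by
    have hinv : HasDerivAt (fun x : ℝ => (x + c)⁻¹) (-1 / (ω + c) ^ 2) ω := by
      have := ((hasDerivAt_id ω).add_const c).inv hωc.ne'
      exact this.congr_deriv (by simp)
    have := hinv.const_mul c
    have heq : c * (-1 / (ω + c) ^ 2) = -(c / (ω + c) ^ 2) := by ring
    simpa [div_eq_mul_inv, heq] using this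
  have := (h1.sub h2).sub h3
  refine this.congr_deriv ?_
  ring

private lemma gAux_deriv1_pos (c : ℝ) (hc : 0 < c) {ω : ℝ} (hω : 0 < ω) :
    0 < Real.log (ω + c) - Real.log ω - c / (ω + c) := by
  have hωc : (0:ℝ) < ω + c := by linarith
  have hne : ω / (ω + c) ≠ 1 := by
    have : ω / (ω + c) < 1 := (div_lt_one hωc).2 (by linarith)
    exact this.ne
  have h := Real.log_lt_sub_one_of_pos (div_pos hω hωc) hne
  rw [Real.log_div hω.ne' hωc.ne'] at h
  have heq : ω / (ω + c) - 1 = -(c / (ω + c)) := by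
    field_simp
    ring
  rw [heq] at h
  linarith

private lemma gAux_deriv2_neg (c : ℝ) (hc : 0 < c) {ω : ℝ} (hω : 0 < ω) :
    (ω + c)⁻¹ - ω⁻¹ + c / (ω + c) ^ 2 < 0 := by
  have hωc : (0:ℝ) < ω + c := by linarith
  have heq : (ω + c)⁻¹ - ω⁻¹ + c / (ω + c) ^ 2 = -(c ^ 2 / (ω * (ω + c) ^ 2)) := by
    field_simp
    ring
  rw [heq]
  have : 0 < c ^ 2 / (ω * (ω + c) ^ 2) := by positivity
  linarith

private lemma gAux_pos (c : ℝ) (hc : 0 < c) {ω : ℝ} (hω : 0 < ω) : 0 < gAux c ω := by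
  have : Real.log ω < Real.log (ω + c) := Real.log_lt_log hω (by linarith)
  exact mul_pos hω (by linarith)

private lemma gAux_contOn (c : ℝ) (hc : 0 < c) : ContinuousOn (gAux c) (Set.Ioi 0) :=
  fun x hx => ((gAux_hasDerivAt c hc hx).continuousAt).continuousWithinAt

private lemma gAux_strictMono (c : ℝ) (hc : 0 < c) : StrictMonoOn (gAux c) (Set.Ioi 0) := by
  apply strictMonoOn_of_deriv_pos (convex_Ioi 0) (gAux_contOn c hc)
  intro x hx
  rw [interior_Ioi] at hx
  rw [(gAux_hasDerivAt c hc hx).deriv]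
  exact gAux_deriv1_pos c hc hx

private lemma gAux_concave (c : ℝ) (hc : 0 < c) : ConcaveOn ℝ (Set.Ioi 0) (gAux c) := by
  have h := strictConcaveOn_of_deriv2_neg' (convex_Ioi 0) (gAux_contOn c hc) ?_
  · exact h.concaveOn
  intro x hx
  have hx' : (0:ℝ) < x := hx
  have hEq : deriv (gAux c) =ᶠ[nhds x]
      (fun y : ℝ => Real.log (y + c) - Real.log y - c / (y + c)) := by
    filter_upwards [isOpen_Ioi.mem_nhds hx] with y hy
    exact (gAux_hasDerivAt c hc hy).deriv
  have : deriv^[2] (gAux c) x = deriv (deriv (gAux c)) x := by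
    simp [Function.iterate_succ, Function.iterate_one]
  rw [this, hEq.deriv_eq, (gAux_deriv1_hasDerivAt c hc hx').deriv]
  exact gAux_deriv2_neg c hc hx'

private lemma f_eq (c : ℝ) (hc : 0 < c) {ω : ℝ} (hω : 0 < ω) :
    1 / (ω * Real.logb 2 (1 + c / ω)) = Real.log 2 / gAux c ω := by
  have hωc : (0:ℝ) < ω + c := by linarith
  have h1 : (1 : ℝ) + c / ω = (ω + c) / ω := by field_simp
  have h2 : Real.logb 2 ((ω + c) / ω) = (Real.log (ω + c) - Real.log ω) / Real.log 2 := by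
    rw [Real.logb, Real.log_div hωc.ne' hω.ne']
  rw [h1, h2, gAux]
  rw [← mul_div_assoc, one_div_div]

/-- The per-unit G2S delay f₂(ω) = 1 / (ω log₂(1 + c/ω)) is convex, positive and
strictly decreasing on ω > 0. -/
theorem stmt_13 (c : ℝ) (hc : 0 < c) :
    ConvexOn ℝ (Set.Ioi 0) (fun ω : ℝ => 1 / (ω * Real.logb 2 (1 + c / ω))) ∧
    (∀ ω : ℝ, 0 < ω → 0 < 1 / (ω * Real.logb 2 (1 + c / ω))) ∧
    StrictAntiOn (fun ω : ℝ => 1 / (ω * Real.logb 2 (1 + c / ω))) (Set.Ioi 0) := by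
  have hk : (0:ℝ) < Real.log 2 := Real.log_pos one_lt_two
  refine ⟨?_, ?_, ?_⟩
  · -- convexity
    refine ⟨convex_Ioi 0, ?_⟩
    intro x hx y hy a b ha hb hab
    have hx' : (0:ℝ) < x := hx
    have hy' : (0:ℝ) < y := hy
    have hmix : a • x + b • y ∈ Set.Ioi (0:ℝ) := (convex_Ioi 0) hx hy ha hb hab
    have hmix' : (0:ℝ) < a • x + b • y := hmix
    simp only [smul_eq_mul] at hmix hmix' ⊢
    rw [f_eq c hc hx', f_eq c hc hy', f_eq c hc hmix']
    set p := gAux c x with hp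
    set q := gAux c y with hq
    have hpp : 0 < p := gAux_pos c hc hx'
    have hqq : 0 < q := gAux_pos c hc hy'
    have hconc : a * p + b * q ≤ gAux c (a * x + b * y) := by
      have := (gAux_concave c hc).2 hx hy ha hb hab
      simpa [smul_eq_mul] using this
    have h1 : 0 < a * p + b * q := by
      rcases ha.lt_or_eq with h | h
      · nlinarith [mul_nonneg hb hqq.le]
      · have hb1 : b = 1 := by linarith
        rw [← h] at *
        simp [hb1]
        nlinarith
    have step1 : Real.log 2 / gAux c (a * x + b * y) ≤ Real.log 2 / (a * p + b * q) :=
      div_le_div_of_nonneg_left hk.le h1 hconc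
    have step2 : Real.log 2 / (a * p + b * q) ≤ a * (Real.log 2 / p) + b * (Real.log 2 / q) := by
      have h2 : a * (Real.log 2 / p) + b * (Real.log 2 / q)
          = Real.log 2 * (a * q + b * p) / (p * q) := by
        field_simp
      rw [h2, div_le_div_iff₀ h1 (mul_pos hpp hqq)]
      have hbase : p * q ≤ (a * q + b * p) * (a * p + b * q) := by
        have hb' : b = 1 - a := by linarith
        rw [hb']
        nlinarith [mul_nonneg (mul_nonneg ha (by linarith : (0:ℝ) ≤ 1 - a))
          (sq_nonneg (p - q))]
      nlinarith [mul_le_mul_of_nonneg_left hbase hk.le]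
    linarith
  · -- positivity
    intro ω hω
    rw [f_eq c hc hω]
    exact div_pos hk (gAux_pos c hc hω)
  · -- strict antitonicity
    intro x hx y hy hxy
    have hx' : (0:ℝ) < x := hx
    have hy' : (0:ℝ) < y := hy
    simp only
    rw [f_eq c hc hx', f_eq c hc hy']
    exact div_lt_div_of_pos_left hk (gAux_pos c hc hx') (gAux_strictMono c hc hx hy hxy)
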